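/- In the two-party setting with ζ[0] > 0, in any execution of the Eneström–Phragmén procedure: if seat s+1 is allocated to A and seat s+2 is allocated to B (with s+3 ≤ n), then α[s+2] > β[s+2], so seat s+3 is necessarily allocated to A; and symmetrically with A and B interchanged. -/
import Mathlib


/-!
The Eneström–Phragmén procedure in the two-party setting: the candidates are two
parties `A` and `B` of unlimited capacity, and the vote types are `{A}`, `{B}` and
`{A,B}` with step-`s` weights (divided by the total vote `v`) denoted `α s`, `β s`
and `ζ s` respectively; `ρ n = q / v = 1 / (n + 1)` is the normalized Droop quota.
At step `s < n`, seat `s + 1` goes to `A` (recorded by `toA s = true`) or to `B`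
(`toA s = false`); the winner must maximize the support (`α s + ζ s` for `A`,
`β s + ζ s` for `B`), and the votes approving the winner are reduced according
to the quota rule.
-/

namespace EP2

/-- The normalized Droop quota `ρ = q / v = 1 / (n + 1)`. -/
noncomputable def ρ (n : ℕ) : ℝ := 1 / (n + 1)

/-- An execution of the Eneström–Phragmén procedure in the two-party setting, with
`n` seats and initial normalized weights `α0, β0, ζ0` of the vote types
`{A}`, `{B}`, `{A,B}`. -/
structure TPExec (n : ℕ) (α0 β0 ζ0 : ℝ) : Type where
  /-- normalized weight of the votes approving only `A` -/
  α : ℕ → ℝ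
  /-- normalized weight of the votes approving only `B` -/
  β : ℕ → ℝ
  /-- normalized weight of the votes approving both `A` and `B` -/
  ζ : ℕ → ℝ
  /-- `toA s = true` iff seat `s + 1` is allocated to party `A` -/
  toA : ℕ → Bool
  init_α : α 0 = α0
  init_β : β 0 = β0
  init_ζ : ζ 0 = ζ0
  /-- the winner maximizes the support: if `A` wins then `β s + ζ s ≤ α s + ζ s` -/
  choiceA : ∀ s < n, toA s = true → β s ≤ α s
  /-- the winner maximizes the support: if `B` wins then `α s + ζ s ≤ β s + ζ s` -/
  choiceB : ∀ s < n, toA s = false → α s ≤ β s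
  stepA_ge : ∀ s < n, toA s = true → ρ n ≤ α s + ζ s →
    α (s + 1) = (1 - ρ n / (α s + ζ s)) * α s ∧
    ζ (s + 1) = (1 - ρ n / (α s + ζ s)) * ζ s
  stepA_lt : ∀ s < n, toA s = true → α s + ζ s < ρ n →
    α (s + 1) = 0 ∧ ζ (s + 1) = 0
  stepA_β : ∀ s < n, toA s = true → β (s + 1) = β s
  stepB_ge : ∀ s < n, toA s = false → ρ n ≤ β s + ζ s →
    β (s + 1) = (1 - ρ n / (β s + ζ s)) * β s ∧
    ζ (s + 1) = (1 - ρ n / (β s + ζ s)) * ζ s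
  stepB_lt : ∀ s < n, toA s = false → β s + ζ s < ρ n →
    β (s + 1) = 0 ∧ ζ (s + 1) = 0
  stepB_α : ∀ s < n, toA s = false → α (s + 1) = α s

/-- Number of seats allocated to party `A` during steps `a, …, b - 1`. -/
def cntA {n : ℕ} {α0 β0 ζ0 : ℝ} (E : TPExec n α0 β0 ζ0) (a b : ℕ) : ℕ :=
  ((Finset.Ico a b).filter (fun s => E.toA s = true)).card

/-- Number of seats allocated to party `B` during steps `a, …, b - 1`. -/
def cntB {n : ℕ} {α0 β0 ζ0 : ℝ} (E : TPExec n α0 β0 ζ0) (a b : ℕ) : ℕ :=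
  ((Finset.Ico a b).filter (fun s => E.toA s = false)).card

/-- Total number of seats allocated to party `A`. -/
def nA {n : ℕ} {α0 β0 ζ0 : ℝ} (E : TPExec n α0 β0 ζ0) : ℕ := cntA E 0 n

end EP2

namespace EP2

/-- Swap the roles of the two parties in an execution. -/
noncomputable def TPExec.swap {n : ℕ} {α0 β0 ζ0 : ℝ} (E : TPExec n α0 β0 ζ0) :
    TPExec n β0 α0 ζ0 where
  α := E.β
  β := E.α
  ζ := E.ζ
  toA := fun s => !E.toA s
  init_α := E.init_β
  init_β := E.init_α
  init_ζ := E.init_ζ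
  choiceA := fun s hs h => E.choiceB s hs (by simpa using h)
  choiceB := fun s hs h => E.choiceA s hs (by simpa using h)
  stepA_ge := fun s hs h => E.stepB_ge s hs (by simpa using h)
  stepA_lt := fun s hs h => E.stepB_lt s hs (by simpa using h)
  stepA_β := fun s hs h => E.stepB_α s hs (by simpa using h)
  stepB_ge := fun s hs h => E.stepA_ge s hs (by simpa using h)
  stepB_lt := fun s hs h => E.stepA_lt s hs (by simpa using h)
  stepB_α := fun s hs h => E.stepA_β s hs (by simpa using h)

lemma rho_pos (n : ℕ) : 0 < ρ n := by
  rw [ρ]; positivity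

lemma rho_mul (n : ℕ) : ((n : ℝ) + 1) * ρ n = 1 := by
  rw [ρ]; field_simp

/-- Invariant: up to step `n - 1`, all three weights remain positive and the
total weight is at least `1 - t * ρ`. -/
lemma inv_pos {n : ℕ} {α0 β0 ζ0 : ℝ}
    (hα0 : 0 < α0) (hβ0 : 0 < β0) (hζ0 : 0 < ζ0) (hsum : α0 + β0 + ζ0 = 1)
    (E : TPExec n α0 β0 ζ0) :
    ∀ t, t + 1 ≤ n →
      0 < E.α t ∧ 0 < E.β t ∧ 0 < E.ζ t ∧
        1 - (t : ℝ) * ρ n ≤ E.α t + E.β t + E.ζ t := by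
  intro t
  induction t with
  | zero =>
    intro _
    rw [E.init_α, E.init_β, E.init_ζ]
    refine ⟨hα0, hβ0, hζ0, by simp [hsum]⟩
  | succ t ih =>
    intro htn
    obtain ⟨ha, hb, hz, hsumt⟩ := ih (by omega)
    have ht : t < n := by omega
    have hρ := rho_pos n
    have hcast : (t : ℝ) + 3 ≤ (n : ℝ) + 1 := by
      have : t + 3 ≤ n + 1 := by omega
      exact_mod_cast this
    have h3ρ : 3 * ρ n ≤ 1 - (t : ℝ) * ρ n := by
      have h1 := rho_mul n
      nlinarith [hρ.le, mul_le_mul_of_nonneg_right hcast hρ.le]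
    cases hA : E.toA t with
    | true =>
      have hβα := E.choiceA t ht hA
      set W := E.α t + E.ζ t with hWdef
      have hWpos : 0 < W := by positivity
      have hρW : ρ n < W := by nlinarith
      obtain ⟨hα', hζ'⟩ := E.stepA_ge t ht hA hρW.le
      have hβ' := E.stepA_β t ht hA
      have hcpos : 0 < 1 - ρ n / W := by
        have : ρ n / W < 1 := (div_lt_one hWpos).mpr hρW
        linarith
      have hcW : (1 - ρ n / W) * W = W - ρ n := by
        field_simp
      refine ⟨by rw [hα']; exact mul_pos hcpos ha,
        by rw [hβ']; exact hb,
        by rw [hζ']; exact mul_pos hcpos hz, ?_⟩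
      rw [hα', hβ', hζ']
      have hkey : (1 - ρ n / W) * E.α t + (1 - ρ n / W) * E.ζ t = W - ρ n := by
        rw [← mul_add, ← hWdef, hcW]
      push_cast
      nlinarith
    | false =>
      have hαβ := E.choiceB t ht hA
      set W := E.β t + E.ζ t with hWdef
      have hWpos : 0 < W := by positivity
      have hρW : ρ n < W := by nlinarith
      obtain ⟨hβ', hζ'⟩ := E.stepB_ge t ht hA hρW.le
      have hα' := E.stepB_α t ht hA
      have hcpos : 0 < 1 - ρ n / W := by
        have : ρ n / W < 1 := (div_lt_one hWpos).mpr hρW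
        linarith
      have hcW : (1 - ρ n / W) * W = W - ρ n := by
        field_simp
      refine ⟨by rw [hα']; exact ha,
        by rw [hβ']; exact mul_pos hcpos hb,
        by rw [hζ']; exact mul_pos hcpos hz, ?_⟩
      rw [hα', hβ', hζ']
      have hkey : (1 - ρ n / W) * E.β t + (1 - ρ n / W) * E.ζ t = W - ρ n := by
        rw [← mul_add, ← hWdef, hcW]
      push_cast
      nlinarith

/-- The `A`-then-`B` half of the main theorem. -/
lemma main_aux {n : ℕ} {α0 β0 ζ0 : ℝ}
    (hα0 : 0 < α0) (hβ0 : 0 < β0) (hζ0 : 0 < ζ0) (hsum : α0 + β0 + ζ0 = 1)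
    (E : TPExec n α0 β0 ζ0) (s : ℕ) (hs : s + 3 ≤ n)
    (hA : E.toA s = true) (hB : E.toA (s + 1) = false) :
    E.β (s + 2) < E.α (s + 2) ∧ E.toA (s + 2) = true := by
  have hρ := rho_pos n
  obtain ⟨ha, hb, hz, hsumt⟩ := inv_pos hα0 hβ0 hζ0 hsum E s (by omega)
  have hsn : s < n := by omega
  have hsn1 : s + 1 < n := by omega
  have hsn2 : s + 2 < n := by omega
  have hcast : (s : ℝ) + 4 ≤ (n : ℝ) + 1 := by
    have : s + 4 ≤ n + 1 := by omega
    exact_mod_cast this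
  have h4ρ : 4 * ρ n ≤ 1 - (s : ℝ) * ρ n := by
    have h1 := rho_mul n
    nlinarith [hρ.le, mul_le_mul_of_nonneg_right hcast hρ.le]
  have hβα := E.choiceA s hsn hA
  -- step s : A wins
  set W := E.α s + E.ζ s with hWdef
  have hWpos : 0 < W := by positivity
  have hW2ρ : 2 * ρ n ≤ W := by nlinarith
  have hρW : ρ n < W := by nlinarith
  obtain ⟨hα1, hζ1⟩ := E.stepA_ge s hsn hA hρW.le
  have hβ1 := E.stepA_β s hsn hA
  set c := 1 - ρ n / W with hcdef
  have hcpos : 0 < c := by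
    have : ρ n / W < 1 := (div_lt_one hWpos).mpr hρW
    rw [hcdef]; linarith
  have hclt : c < 1 := by
    have : 0 < ρ n / W := div_pos hρ hWpos
    rw [hcdef]; linarith
  -- step s + 1 : B wins
  set W' := E.β (s + 1) + E.ζ (s + 1) with hW'def
  have hW'eq : W' = E.β s + c * E.ζ s := by rw [hW'def, hβ1, hζ1]
  have hW'pos : 0 < W' := by
    rw [hW'eq]; positivity
  have hW'ltW : W' < W := by
    rw [hW'eq, hWdef]
    have : c * E.ζ s < E.ζ s := by nlinarith
    linarith
  have hρW' : ρ n < W' := by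
    -- 2 W' ≥ α(s+1) + β(s+1) + ζ(s+1) = (W - ρ) + β s ≥ 1 - (s+1)ρ ≥ 3ρ
    have hαβ1 := E.choiceB (s + 1) hsn1 hB
    have hcW : c * W = W - ρ n := by
      rw [hcdef]; field_simp
    have hz1 : 0 < E.ζ (s + 1) := by rw [hζ1]; exact mul_pos hcpos hz
    have htot1 : E.α (s + 1) + E.β (s + 1) + E.ζ (s + 1) =
        c * E.α s + E.β s + c * E.ζ s := by rw [hα1, hβ1, hζ1]
    have hca : c * E.α s + c * E.ζ s = W - ρ n := by
      rw [← mul_add, ← hWdef, hcW]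
    have htotge : 1 - ((s : ℝ) + 1) * ρ n ≤ E.α (s + 1) + E.β (s + 1) + E.ζ (s + 1) := by
      rw [htot1]; linarith [hca, hsumt]
    linarith [hαβ1, hz1, htotge, h4ρ, hρ, hW'def]
  obtain ⟨hβ2, hζ2⟩ := E.stepB_ge (s + 1) hsn1 hB hρW'.le
  have hα2 := E.stepB_α (s + 1) hsn1 hB
  set c' := 1 - ρ n / W' with hc'def
  have hc'ltc : c' < c := by
    have : ρ n / W < ρ n / W' := div_lt_div_of_pos_left hρ hW'pos hW'ltW
    rw [hc'def, hcdef]; linarith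
  have hmain : E.β (s + 2) < E.α (s + 2) := by
    rw [hβ2, hα2, hα1, hβ1]
    calc c' * E.β s < c * E.β s := by
          exact mul_lt_mul_of_pos_right hc'ltc hb
      _ ≤ c * E.α s := by
          exact mul_le_mul_of_nonneg_left hβα hcpos.le
  refine ⟨hmain, ?_⟩
  cases hC : E.toA (s + 2) with
  | true => rfl
  | false =>
    have := E.choiceB (s + 2) hsn2 hC
    linarith

end EP2

open EP2 in
/-- Lemma 2 of the paper: in the two-party setting with `ζ[0] > 0`, in
any execution, if seat `s+1` goes to `A` and seat `s+2` goes to `B` (with `s+3 ≤ n`),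
then `α[s+2] > β[s+2]`, so seat `s+3` necessarily goes to `A`; and symmetrically with
`A` and `B` interchanged. -/
theorem enestrom_phragmen_two_party_no_two_consecutive_to_other
    (n : ℕ) (hn : 1 ≤ n) (α0 β0 ζ0 : ℝ)
    (hα0 : 0 < α0) (hβ0 : 0 < β0) (hζ0 : 0 < ζ0) (hsum : α0 + β0 + ζ0 = 1)
    (E : TPExec n α0 β0 ζ0) (s : ℕ) (hs : s + 3 ≤ n) :
    (E.toA s = true → E.toA (s + 1) = false →
      E.β (s + 2) < E.α (s + 2) ∧ E.toA (s + 2) = true) ∧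
    (E.toA s = false → E.toA (s + 1) = true →
      E.α (s + 2) < E.β (s + 2) ∧ E.toA (s + 2) = false) := by
  constructor
  · intro hA hB
    exact main_aux hα0 hβ0 hζ0 hsum E s hs hA hB
  · intro hB hA
    have h := main_aux hβ0 hα0 hζ0 (by linarith) E.swap s hs
      (by simp [TPExec.swap, hB]) (by simp [TPExec.swap, hA])
    refine ⟨h.1, ?_⟩
    have h2 := h.2
    simp only [TPExec.swap, Bool.not_eq_true'] at h2
    exact h2
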